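/- arXiv:2001.00665 — 3 statements merged into one kernel-verified Lean document; each statement's English description precedes it below -/
import Mathlib

section
/- Let u_1, …, u_m : ℝ^d → ℝ be differentiable functions with G-bounded gradient dissimilarity, i.e., ‖∇u_i(x) − ∇u_j(y)‖ ≤ G‖x − y‖ for all i, j ∈ {1, …, m} and all x, y ∈ ℝ^d. For x = (x^{(1)}, …, x^{(m)}) ∈ (ℝ^d)^m, write x̄ = (1/m)∑_{i=1}^m x^{(i)}, let ∇U_v(x) ∈ (ℝ^d)^m denote the stacked vector whose i-th block is ∇u_i(x^{(i)}), and let 1_m ⊗ v denote the stack of m copies of v ∈ ℝ^d. Then ‖∇U_v(x) − 1_m ⊗ ((1/m)∑_{j=1}^m ∇u_j(x^{(j)}))‖ ≤ 2G ‖x − 1_m ⊗ x̄‖, where the norm is the Euclidean norm on (ℝ^d)^m. -/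
/-- If the family `u i : ℝ^d → ℝ` has `G`-bounded gradient
dissimilarity (`‖∇u_i(x) - ∇u_j(y)‖ ≤ G‖x - y‖` for all `i, j, x, y`), then the
stacked gradient vector `∇U_v(x)` deviates from the stack of its blockwise
average by at most `2G` times the consensus error `‖x - 1 ⊗ x̄‖`, in the
Euclidean norm on `(ℝ^d)^m`. -/
theorem stacked_gradient_consensus_bound_dissimilarity
    (m d : ℕ) (hm : 1 ≤ m) (hd : 1 ≤ d) (G : ℝ)
    (u : Fin m → EuclideanSpace ℝ (Fin d) → ℝ)
    (hdiff : ∀ i, Differentiable ℝ (u i))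
    (hdissim : ∀ i j : Fin m, ∀ x y : EuclideanSpace ℝ (Fin d),
      ‖gradient (u i) x - gradient (u j) y‖ ≤ G * ‖x - y‖)
    (x : PiLp 2 fun _ : Fin m => EuclideanSpace ℝ (Fin d)) :
    ‖(WithLp.equiv 2 (∀ _ : Fin m, EuclideanSpace ℝ (Fin d))).symm
        (fun i => gradient (u i) (x i) - (m : ℝ)⁻¹ • ∑ j, gradient (u j) (x j))‖ ≤
      2 * G * ‖(WithLp.equiv 2 (∀ _ : Fin m, EuclideanSpace ℝ (Fin d))).symm
        (fun i => x i - (m : ℝ)⁻¹ • ∑ j, x j)‖ := by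
  classical
  have hm0 : (m : ℝ) ≠ 0 := by
    exact_mod_cast Nat.one_le_iff_ne_zero.mp hm
  have hminv : (0:ℝ) ≤ (m:ℝ)⁻¹ := by positivity
  set g : Fin m → EuclideanSpace ℝ (Fin d) := fun i => gradient (u i) (x i) with hgdef
  set c : Fin m → EuclideanSpace ℝ (Fin d) := fun i => x i - (m:ℝ)⁻¹ • ∑ j, x j with hcdef
  set A : ℝ := (m:ℝ)⁻¹ * ∑ j, ‖c j‖ with hAdef
  -- G is nonnegative
  have hG : 0 ≤ G := by
    have i : Fin m := ⟨0, hm⟩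
    have h := hdissim i i 0 (EuclideanSpace.single ⟨0, hd⟩ (1:ℝ))
    have hn : ‖(0:EuclideanSpace ℝ (Fin d)) - EuclideanSpace.single ⟨0, hd⟩ (1:ℝ)‖ = 1 := by
      rw [zero_sub, norm_neg, EuclideanSpace.norm_single]; norm_num
    rw [hn, mul_one] at h
    exact le_trans (norm_nonneg _) h
  have hA : 0 ≤ A := by
    apply mul_nonneg hminv
    exact Finset.sum_nonneg fun j _ => norm_nonneg _
  -- pointwise bound
  have key : ∀ i, ‖g i - (m:ℝ)⁻¹ • ∑ j, g j‖ ≤ G * (‖c i‖ + A) := by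
    intro i
    have h1 : g i - (m:ℝ)⁻¹ • ∑ j, g j = (m:ℝ)⁻¹ • ∑ j : Fin m, (g i - g j) := by
      rw [Finset.sum_sub_distrib, Finset.sum_const, Finset.card_univ, Fintype.card_fin,
        smul_sub, ← Nat.cast_smul_eq_nsmul ℝ, smul_smul, inv_mul_cancel₀ hm0, one_smul]
    rw [h1]
    have h2 : ∀ j, ‖g i - g j‖ ≤ G * (‖c i‖ + ‖c j‖) := by
      intro j
      refine le_trans (show ‖g i - g j‖ ≤ G * ‖x i - x j‖ from hdissim i j (x i) (x j)) ?_
      have hx : x i - x j = c i - c j := by simp [hcdef]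
      rw [hx, mul_add]
      have := norm_sub_le (c i) (c j)
      nlinarith
    calc ‖(m:ℝ)⁻¹ • ∑ j : Fin m, (g i - g j)‖
        = (m:ℝ)⁻¹ * ‖∑ j : Fin m, (g i - g j)‖ := by
          rw [norm_smul, Real.norm_eq_abs, abs_of_nonneg hminv]
      _ ≤ (m:ℝ)⁻¹ * ∑ j : Fin m, ‖g i - g j‖ := by
          gcongr; exact norm_sum_le _ _
      _ ≤ (m:ℝ)⁻¹ * ∑ j : Fin m, G * (‖c i‖ + ‖c j‖) := by
          gcongr with j
          exact h2 j
      _ = G * (‖c i‖ + A) := by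
          rw [hAdef]
          rw [Finset.sum_congr rfl (fun j _ => mul_add G ‖c i‖ ‖c j‖)]
          rw [Finset.sum_add_distrib, Finset.sum_const, Finset.card_univ, Fintype.card_fin,
            ← Finset.mul_sum]
          field_simp
          ring
  -- squared norms
  have hLsq : ‖(WithLp.equiv 2 (∀ _ : Fin m, EuclideanSpace ℝ (Fin d))).symm
      (fun i => g i - (m:ℝ)⁻¹ • ∑ j, g j)‖ ^ 2
      = ∑ i, ‖g i - (m:ℝ)⁻¹ • ∑ j, g j‖ ^ 2 := by
    rw [PiLp.norm_sq_eq_of_L2]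
    simp [PiLp.toLp_apply]
  have hRsq : ‖(WithLp.equiv 2 (∀ _ : Fin m, EuclideanSpace ℝ (Fin d))).symm
      (fun i => c i)‖ ^ 2 = ∑ i, ‖c i‖ ^ 2 := by
    rw [PiLp.norm_sq_eq_of_L2]
    simp [PiLp.toLp_apply]
  set S : ℝ := ∑ i, ‖c i‖ ^ 2 with hSdef
  have hS : 0 ≤ S := Finset.sum_nonneg fun i _ => sq_nonneg _
  -- Cauchy-Schwarz: m * A^2 ≤ S
  have hCS : (m:ℝ) * A ^ 2 ≤ S := by
    have h := sq_sum_le_card_mul_sum_sq (s := Finset.univ) (f := fun j : Fin m => ‖c j‖)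
    rw [Finset.card_univ, Fintype.card_fin] at h
    have hA2 : A ^ 2 = ((m:ℝ)⁻¹) ^ 2 * (∑ j, ‖c j‖) ^ 2 := by rw [hAdef]; ring
    rw [hA2]
    have h2 := mul_le_mul_of_nonneg_left
      (mul_le_mul_of_nonneg_left h (sq_nonneg (m:ℝ)⁻¹)) (Nat.cast_nonneg m)
    have heq : (m:ℝ) * (((m:ℝ)⁻¹) ^ 2 * ((m:ℝ) * ∑ i, ‖c i‖ ^ 2)) = S := by
      rw [hSdef]; field_simp
    linarith [h2, heq.le, heq.ge]
  -- sum bound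
  have hsum : ∑ i, ‖g i - (m:ℝ)⁻¹ • ∑ j, g j‖ ^ 2 ≤ (2 * G) ^ 2 * S := by
    calc ∑ i, ‖g i - (m:ℝ)⁻¹ • ∑ j, g j‖ ^ 2
        ≤ ∑ i, (G * (‖c i‖ + A)) ^ 2 := by
          apply Finset.sum_le_sum
          intro i _
          have := key i
          have h0 : (0:ℝ) ≤ ‖g i - (m:ℝ)⁻¹ • ∑ j, g j‖ := norm_nonneg _
          nlinarith
      _ ≤ ∑ i, G ^ 2 * (2 * ‖c i‖ ^ 2 + 2 * A ^ 2) := by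
          apply Finset.sum_le_sum
          intro i _
          nlinarith [sq_nonneg (‖c i‖ - A), sq_nonneg G]
      _ = G ^ 2 * (2 * S + 2 * ((m:ℝ) * A ^ 2)) := by
          rw [← Finset.mul_sum, Finset.sum_add_distrib, ← Finset.mul_sum,
            Finset.sum_const, Finset.card_univ, Fintype.card_fin, hSdef]
          push_cast
          ring
      _ ≤ G ^ 2 * (2 * S + 2 * S) := mul_le_mul_of_nonneg_left (by linarith [hCS]) (sq_nonneg G)
      _ = (2 * G) ^ 2 * S := by ring
  -- conclude
  have hfinal : ‖(WithLp.equiv 2 (∀ _ : Fin m, EuclideanSpace ℝ (Fin d))).symm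
      (fun i => g i - (m:ℝ)⁻¹ • ∑ j, g j)‖ ^ 2
      ≤ (2 * G * ‖(WithLp.equiv 2 (∀ _ : Fin m, EuclideanSpace ℝ (Fin d))).symm
        (fun i => c i)‖) ^ 2 := by
    rw [hLsq, mul_pow, hRsq]
    exact hsum
  have h2 := Real.sqrt_le_sqrt hfinal
  rw [Real.sqrt_sq (norm_nonneg _), Real.sqrt_sq (by positivity)] at h2
  exact h2
end

section
/- Let L, m, d, h > 0 satisfy m·h ≤ 1 and L·h ≤ 1 (so that ρ := max(1 − m·h, L·h − 1) = 1 − m·h ∈ [0, 1)), and let χ = 7√2/6. Let (w_k)_{k≥0} be a sequence of nonnegative reals satisfying, for all k ≥ 0, w_{k+1} ≤ ρ·w_k + χ·L·(h³·d)^{1/2} + L·h/(k+2). Then limsup_{K→∞} w_K ≤ χ·L·(h·d)^{1/2}/m. -/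
open Filter

/-- constant step size part of Theorem 3, sequence level.
With `m·h ≤ 1`, `L·h ≤ 1`, `ρ = 1 - m·h` and `χ = 7√2/6`, any nonnegative
sequence satisfying `w_{k+1} ≤ ρ·w_k + χ·L·√(h³·d) + L·h/(k+2)` has
`limsup_{K→∞} w_K ≤ χ·L·√(h·d)/m`. -/
theorem constant_stepsize_wasserstein_limit
    (L m d h : ℝ) (hL : 0 < L) (hm : 0 < m) (hd : 0 < d) (hh : 0 < h)
    (hmh : m * h ≤ 1) (hLh : L * h ≤ 1)
    (χ : ℝ) (hχ : χ = 7 * Real.sqrt 2 / 6)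
    (ρ : ℝ) (hρ : ρ = 1 - m * h)
    (w : ℕ → ℝ) (hw_nonneg : ∀ k, 0 ≤ w k)
    (hrec : ∀ k : ℕ,
      w (k + 1) ≤ ρ * w k + χ * L * Real.sqrt (h ^ 3 * d) + L * h / ((k : ℝ) + 2)) :
    limsup w atTop ≤ χ * L * Real.sqrt (h * d) / m := by
  have hχpos : 0 < χ := by
    rw [hχ]; positivity
  set A : ℝ := χ * L * Real.sqrt (h ^ 3 * d) with hA
  set T : ℝ := χ * L * Real.sqrt (h * d) / m with hT
  have hmhpos : 0 < m * h := mul_pos hm hh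
  have hρ0 : 0 ≤ ρ := by rw [hρ]; linarith
  have hρ1 : ρ < 1 := by rw [hρ]; linarith
  have hsqrt : Real.sqrt (h ^ 3 * d) = h * Real.sqrt (h * d) := by
    have : h ^ 3 * d = h ^ 2 * (h * d) := by ring
    rw [this, Real.sqrt_mul (sq_nonneg h), Real.sqrt_sq hh.le]
  have hAT : A = m * h * T := by
    rw [hA, hT, hsqrt]; field_simp
  have hTpos : 0 < T := by
    rw [hT]
    positivity
  -- main epsilon argument
  have key : ∀ ε > (0:ℝ), ∀ᶠ k in atTop, w k ≤ T + ε := by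
    intro ε hε
    -- choose N with L*h/(k+2) ≤ ε*m*h/2 for k ≥ N
    obtain ⟨N, hN⟩ : ∃ N : ℕ, ∀ k ≥ N, L * h / ((k : ℝ) + 2) ≤ ε * (m * h) / 2 := by
      obtain ⟨N, hN⟩ := exists_nat_gt (2 * L / (ε * m))
      refine ⟨N, fun k hk => ?_⟩
      have hk2 : (2 * L / (ε * m)) ≤ (k : ℝ) + 2 := by
        have : (N : ℝ) ≤ (k : ℝ) := Nat.cast_le.mpr hk
        linarith
      have hεm : 0 < ε * m := mul_pos hε hm
      rw [div_le_iff₀ (by positivity)]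
      have := (div_le_iff₀ hεm).mp hk2
      nlinarith [hh.le, hε.le, hm.le]
    have step : ∀ n : ℕ, w (N + n) ≤ ρ ^ n * w N + (T + ε / 2) := by
      intro n
      induction n with
      | zero => simp; linarith [hTpos, hε]
      | succ n ih =>
        have h1 := hrec (N + n)
        have h2 := hN (N + n) (Nat.le_add_right N n)
        have h3 : w (N + n + 1) ≤ ρ * w (N + n) + A + ε * (m * h) / 2 := by
          push_cast at h1 h2 ⊢
          linarith
        have h4 : ρ * w (N + n) ≤ ρ * (ρ ^ n * w N + (T + ε / 2)) :=
          mul_le_mul_of_nonneg_left ih hρ0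
        have heq : N + (n + 1) = N + n + 1 := by ring
        rw [heq]
        have : ρ * (T + ε / 2) + A + ε * (m * h) / 2 ≤ T + ε / 2 := by
          rw [hρ, hAT]; nlinarith
        calc w (N + n + 1) ≤ ρ * (ρ ^ n * w N + (T + ε / 2)) + A + ε * (m * h) / 2 := by
              linarith
          _ = ρ ^ (n + 1) * w N + (ρ * (T + ε / 2) + A + ε * (m * h) / 2) := by ring
          _ ≤ ρ ^ (n + 1) * w N + (T + ε / 2) := by linarith
    -- ρ^n * w N → 0
    have htend : Filter.Tendsto (fun n : ℕ => ρ ^ n * w N) atTop (nhds 0) := by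
      have := tendsto_pow_atTop_nhds_zero_of_lt_one hρ0 hρ1
      simpa using this.mul_const (w N)
    have hev : ∀ᶠ n in atTop, ρ ^ n * w N ≤ ε / 2 := by
      have := htend.eventually (eventually_le_nhds (show (0:ℝ) < ε/2 by linarith))
      simpa using this
    obtain ⟨M, hM⟩ := hev.exists_forall_of_atTop
    rw [eventually_atTop]
    refine ⟨N + M, fun k hk => ?_⟩
    obtain ⟨n, rfl⟩ := Nat.exists_eq_add_of_le (le_trans (Nat.le_add_right N M) hk)
    have hMn : M ≤ n := by omega
    linarith [step n, hM n hMn]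
  -- conclude
  have hbd : IsBoundedUnder (· ≥ ·) atTop w :=
    isBoundedUnder_of ⟨0, fun k => (hw_nonneg k)⟩
  have hcb : IsCoboundedUnder (· ≤ ·) atTop w := hbd.isCoboundedUnder_le
  refine le_of_forall_pos_le_add fun ε hε => ?_
  exact limsup_le_of_le hcb (key ε hε)
end

section
/- Let L > 0, m > 1, d > 0, and χ = 7√2/6, and set K̂ = (L+m)/2 − 1. Let (w_k) be a sequence of nonnegative reals satisfying, for all integers k ≥ K̂, w_{k+1} ≤ (1 − m/(k+1))·w_k + χ·L·d^{1/2}/(k+1)^{3/2} + L/(k+1)². Then w_k = O(k^{−1/2}); more precisely, limsup_{k→∞} k^{1/2}·w_k ≤ (χ·L·d^{1/2} + L)/((m−1)/2). -/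
open Filter

/-- Auxiliary: a nonnegative sequence satisfying
`u (k+1) ≤ (1 - a/(k+1)) * u k + B/(k+1)` for `k ≥ N` (with nonnegative
contraction factors) has `limsup u ≤ B / a`. -/
lemma aux_recursion_limsup (a B : ℝ) (ha : 0 < a) (u : ℕ → ℝ)
    (hu : ∀ k, 0 ≤ u k) (N : ℕ)
    (hrec : ∀ k, N ≤ k →
      u (k + 1) ≤ (1 - a / ((k : ℝ) + 1)) * u k + B / ((k : ℝ) + 1))
    (hfac : ∀ k, N ≤ k → 0 ≤ 1 - a / ((k : ℝ) + 1)) :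
    limsup u atTop ≤ B / a := by
  set T : ℝ := B / a with hT
  set v : ℕ → ℝ := fun k => max (u k - T) 0 with hv
  have hv0 : ∀ k, 0 ≤ v k := fun k => le_max_right _ _
  have hvrec : ∀ k, N ≤ k → v (k + 1) ≤ (1 - a / ((k : ℝ) + 1)) * v k := by
    intro k hk
    have hfk := hfac k hk
    rcases le_or_gt (u (k + 1)) T with h | h
    · have h1 : v (k + 1) = 0 := max_eq_right (by simp; linarith)
      rw [h1]
      exact mul_nonneg hfk (hv0 k)
    · have h1 : v (k + 1) = u (k + 1) - T := max_eq_left (by linarith)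
      have h2 : u k - T ≤ v k := le_max_left _ _
      have h3 := hrec k hk
      have hk1 : ((k : ℝ) + 1) ≠ 0 := by positivity
      have haT : (1 - a / ((k : ℝ) + 1)) * T + B / ((k : ℝ) + 1) = T := by
        rw [hT]
        field_simp
        ring
      have hexpand : (1 - a / ((k : ℝ) + 1)) * (u k - T) =
          (1 - a / ((k : ℝ) + 1)) * u k + B / ((k : ℝ) + 1) - T := by
        linear_combination -haT
      have h4 : v (k + 1) ≤ (1 - a / ((k : ℝ) + 1)) * (u k - T) := by
        rw [h1, hexpand]
        linarith
      calc v (k + 1) ≤ (1 - a / ((k : ℝ) + 1)) * (u k - T) := h4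
        _ ≤ (1 - a / ((k : ℝ) + 1)) * v k := mul_le_mul_of_nonneg_left h2 hfk
  -- exponential decay of `v (N + n)`
  have key : ∀ n : ℕ, v (N + n) ≤
      v N * Real.exp (-(a * ∑ i ∈ Finset.range n, 1 / ((N : ℝ) + i + 1))) := by
    intro n
    induction n with
    | zero => simp
    | succ n ih =>
      have hk : N ≤ N + n := Nat.le_add_right _ _
      have hstep := hvrec (N + n) hk
      have hcast : ((N + n : ℕ) : ℝ) = (N : ℝ) + n := by push_cast; ring
      rw [hcast] at hstep
      have ht : (0 : ℝ) < (N : ℝ) + n + 1 := by positivity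
      set t : ℝ := a / ((N : ℝ) + n + 1) with htdef
      have ht0 : 0 ≤ t := by positivity
      have hexp : 1 - t ≤ Real.exp (-t) := by
        have := Real.add_one_le_exp (-t)
        linarith
      have h4 : v (N + n + 1) ≤ Real.exp (-t) * v (N + n) :=
        calc v (N + n + 1) ≤ (1 - t) * v (N + n) := hstep
          _ ≤ Real.exp (-t) * v (N + n) :=
              mul_le_mul_of_nonneg_right hexp (hv0 _)
      have h5 : Real.exp (-t) * v (N + n) ≤
          Real.exp (-t) * (v N * Real.exp (-(a * ∑ i ∈ Finset.range n, 1 / ((N : ℝ) + i + 1)))) :=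
        mul_le_mul_of_nonneg_left ih (Real.exp_nonneg _)
      have hexps : (-t) + -(a * ∑ i ∈ Finset.range n, 1 / ((N : ℝ) + i + 1)) =
          -(a * ∑ i ∈ Finset.range (n + 1), 1 / ((N : ℝ) + i + 1)) := by
        rw [Finset.sum_range_succ, htdef]
        push_cast
        field_simp
        ring
      have h6 : Real.exp (-t) *
          (v N * Real.exp (-(a * ∑ i ∈ Finset.range n, 1 / ((N : ℝ) + i + 1)))) =
          v N * Real.exp (-(a * ∑ i ∈ Finset.range (n + 1), 1 / ((N : ℝ) + i + 1))) := by
        calc Real.exp (-t) *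
            (v N * Real.exp (-(a * ∑ i ∈ Finset.range n, 1 / ((N : ℝ) + i + 1)))) =
            v N * (Real.exp (-t) *
              Real.exp (-(a * ∑ i ∈ Finset.range n, 1 / ((N : ℝ) + i + 1)))) := by ring
          _ = v N * Real.exp ((-t) + -(a * ∑ i ∈ Finset.range n, 1 / ((N : ℝ) + i + 1))) := by
              rw [Real.exp_add]
          _ = v N * Real.exp (-(a * ∑ i ∈ Finset.range (n + 1), 1 / ((N : ℝ) + i + 1))) := by
              rw [hexps]
      have : N + (n + 1) = N + n + 1 := rfl
      rw [this]
      exact h4.trans (h5.trans_eq h6)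
  -- the sums diverge
  have hS : Tendsto (fun n : ℕ => ∑ i ∈ Finset.range n, 1 / ((N : ℝ) + i + 1))
      atTop atTop := by
    have h0 := Real.tendsto_sum_range_one_div_nat_succ_atTop
    have heq : ∀ n : ℕ, ∑ i ∈ Finset.range n, 1 / ((N : ℝ) + i + 1) =
        (∑ i ∈ Finset.range (N + n), (1 / ((i : ℝ) + 1))) -
        ∑ i ∈ Finset.range N, (1 / ((i : ℝ) + 1)) := by
      intro n
      rw [Finset.sum_range_add]
      have hterm : ∀ i : ℕ, (1 : ℝ) / (((N + i : ℕ) : ℝ) + 1) = 1 / ((N : ℝ) + i + 1) := by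
        intro i; push_cast; ring_nf
      simp only [hterm]
      ring
    have h2 : Tendsto (fun n : ℕ => N + n) atTop atTop :=
      (tendsto_add_atTop_nat N).congr fun n => Nat.add_comm n N
    have h1 : Tendsto (fun n : ℕ => ∑ i ∈ Finset.range (N + n), (1 / ((i : ℝ) + 1)))
        atTop atTop := h0.comp h2
    have h3 := tendsto_atTop_add_const_right atTop
      (-(∑ i ∈ Finset.range N, (1 / ((i : ℝ) + 1)))) h1
    refine h3.congr fun n => ?_
    rw [heq n]; ring
  -- hence `v (N + n) → 0`
  have hexp0 : Tendsto
      (fun n : ℕ => v N * Real.exp (-(a * ∑ i ∈ Finset.range n, 1 / ((N : ℝ) + i + 1))))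
      atTop (nhds 0) := by
    have h1 : Tendsto (fun n : ℕ => a * ∑ i ∈ Finset.range n, 1 / ((N : ℝ) + i + 1))
        atTop atTop := Tendsto.const_mul_atTop ha hS
    have h2 : Tendsto (fun n : ℕ => -(a * ∑ i ∈ Finset.range n, 1 / ((N : ℝ) + i + 1)))
        atTop atBot := tendsto_neg_atTop_atBot.comp h1
    have h3 := Real.tendsto_exp_atBot.comp h2
    have h4 := h3.const_mul (v N)
    simpa using h4
  have hvN : Tendsto (fun n : ℕ => v (N + n)) atTop (nhds 0) :=
    squeeze_zero (fun n => hv0 _) key hexp0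
  have hvt : Tendsto v atTop (nhds 0) := by
    rw [← tendsto_add_atTop_iff_nat N]
    refine hvN.congr fun n => ?_
    rw [Nat.add_comm]
  -- conclude on the limsup
  have hub : ∀ k, u k ≤ T + v k := by
    intro k
    have hvk : u k - T ≤ v k := le_max_left _ _
    linarith
  have h1 : Tendsto (fun k : ℕ => T + v k) atTop (nhds T) := by
    have h2 : Tendsto (fun _ : ℕ => T) atTop (nhds T) := tendsto_const_nhds
    simpa using h2.add hvt
  calc limsup u atTop ≤ limsup (fun k => T + v k) atTop := by
        refine limsup_le_limsup (Eventually.of_forall hub) ?_ ?_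
        · exact isCoboundedUnder_le_of_le atTop (x := 0) hu
        · exact h1.isBoundedUnder_le
    _ = T := h1.limsup_eq

set_option maxHeartbeats 1000000 in
/-- diminishing step size part of Theorem 3, sequence level.
With `L > 0`, `m > 1`, `d > 0`, `χ = 7√2/6` and `K̂ = (L+m)/2 - 1`, any
nonnegative sequence satisfying, for `k ≥ K̂`,
`w_{k+1} ≤ (1 - m/(k+1))·w_k + χ·L·√d/(k+1)^{3/2} + L/(k+1)²`
has `limsup_{k→∞} √k·w_k ≤ (χ·L·√d + L)/((m-1)/2)`, i.e. `w_k = O(k^{-1/2})`. -/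
theorem diminishing_stepsize_wasserstein_rate
    (L m d : ℝ) (hL : 0 < L) (hm : 1 < m) (hd : 0 < d)
    (χ : ℝ) (hχ : χ = 7 * Real.sqrt 2 / 6)
    (Khat : ℝ) (hKhat : Khat = (L + m) / 2 - 1)
    (w : ℕ → ℝ) (hw_nonneg : ∀ k, 0 ≤ w k)
    (hrec : ∀ k : ℕ, Khat ≤ (k : ℝ) →
      w (k + 1) ≤ (1 - m / ((k : ℝ) + 1)) * w k
        + χ * L * Real.sqrt d / ((k : ℝ) + 1) ^ ((3 : ℝ) / 2)
        + L / ((k : ℝ) + 1) ^ 2) :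
    limsup (fun k : ℕ => Real.sqrt (k : ℝ) * w k) atTop ≤
      (χ * L * Real.sqrt d + L) / ((m - 1) / 2) := by
  set a : ℝ := (m - 1) / 2 with ha'
  have ha : 0 < a := by rw [ha']; linarith
  set B : ℝ := χ * L * Real.sqrt d + L with hB
  set u : ℕ → ℝ := fun k : ℕ => Real.sqrt (k : ℝ) * w k with hu'
  have hu : ∀ k, 0 ≤ u k := fun k => mul_nonneg (Real.sqrt_nonneg _) (hw_nonneg k)
  have key : ∀ ε : ℝ, 0 < ε → limsup u atTop ≤ B / a + ε := by
    intro ε hε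
    -- find a suitable threshold N
    have hev : ∀ᶠ k : ℕ in atTop, Khat ≤ (k : ℝ) ∧ m ≤ (k : ℝ) + 1 ∧ 1 ≤ (k : ℝ) ∧
        (L / (a * ε)) ^ 2 ≤ (k : ℝ) + 1 := by
      have hcast : Tendsto (fun k : ℕ => (k : ℝ)) atTop atTop := tendsto_natCast_atTop_atTop
      have e1 : ∀ᶠ k : ℕ in atTop, Khat ≤ (k : ℝ) := hcast.eventually_ge_atTop Khat
      have e2 : ∀ᶠ k : ℕ in atTop, m - 1 ≤ (k : ℝ) := hcast.eventually_ge_atTop (m - 1)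
      have e3 : ∀ᶠ k : ℕ in atTop, 1 ≤ (k : ℝ) := hcast.eventually_ge_atTop 1
      have e4 : ∀ᶠ k : ℕ in atTop, (L / (a * ε)) ^ 2 - 1 ≤ (k : ℝ) :=
        hcast.eventually_ge_atTop _
      filter_upwards [e1, e2, e3, e4] with k h1 h2 h3 h4
      exact ⟨h1, by linarith, h3, by linarith⟩
    obtain ⟨N, hN⟩ := eventually_atTop.1 hev
    have hrec' : ∀ k, N ≤ k →
        u (k + 1) ≤ (1 - a / ((k : ℝ) + 1)) * u k + (B + a * ε) / ((k : ℝ) + 1) := by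
      intro k hk
      obtain ⟨c1, c2, c3, c4⟩ := hN k hk
      set x : ℝ := (k : ℝ) + 1 with hx'
      have hx2 : (2 : ℝ) ≤ x := by rw [hx']; linarith
      have hx0 : (0 : ℝ) < x := by linarith
      have hk0 : (0 : ℝ) < (k : ℝ) := by linarith
      have hsx : 0 < Real.sqrt x := Real.sqrt_pos.2 hx0
      have hsk : 0 < Real.sqrt (k : ℝ) := Real.sqrt_pos.2 hk0
      have hss : Real.sqrt x * Real.sqrt x = x := Real.mul_self_sqrt hx0.le
      have h32 : x ^ ((3 : ℝ) / 2) = x * Real.sqrt x := by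
        have h1 : x ^ ((3 : ℝ) / 2) = x ^ ((1 : ℝ) + 1 / 2) := by norm_num
        rw [h1, Real.rpow_add hx0, Real.rpow_one, ← Real.sqrt_eq_rpow]
      have hw := hrec k c1
      rw [← hx'] at hw
      have hcast : ((k + 1 : ℕ) : ℝ) = x := by rw [hx']; push_cast; ring
      -- factor bound for the main term
      have hfacm : 0 ≤ 1 - m / x := by
        have : m / x ≤ 1 := (div_le_one hx0).2 c2
        linarith
      have hxt : x * (1 / x) = 1 := by field_simp
      have hxt3 : x * ((1 / x) * (1 / x)) = 1 / x := by field_simp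
      have ht12 : 1 / x ≤ 1 / 2 := by
        rw [div_le_div_iff₀ hx0 (by norm_num : (0 : ℝ) < 2)]; linarith
      have ht0 : (0 : ℝ) < 1 / x := by positivity
      have hratio : Real.sqrt x ≤ (1 + 1 / x) * Real.sqrt (k : ℝ) := by
        have h1x : (0 : ℝ) ≤ 1 + 1 / x := by positivity
        have hkx : (k : ℝ) = x - 1 := by rw [hx']; ring
        have htsq : (1 / x) * (1 / x) ≤ (1 / 2) * (1 / 2) :=
          mul_le_mul ht12 ht12 ht0.le (by norm_num)
        have hxk : x ≤ (1 + 1 / x) ^ 2 * (k : ℝ) := by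
          rw [hkx]
          nlinarith [hxt, hxt3, ht12, ht0, htsq, hx2]
        calc Real.sqrt x ≤ Real.sqrt ((1 + 1 / x) ^ 2 * (k : ℝ)) := Real.sqrt_le_sqrt hxk
          _ = (1 + 1 / x) * Real.sqrt (k : ℝ) := by
              rw [Real.sqrt_mul (by positivity), Real.sqrt_sq h1x]
      have hcoef : (1 - m / x) * (1 + 1 / x) ≤ 1 - a / x := by
        rw [ha']
        have key2 : (1 - m / x) * (1 + 1 / x) * x ^ 2 = x ^ 2 + x - m * x - m := by
          field_simp
          ring
        have key3 : (1 - (m - 1) / 2 / x) * x ^ 2 = x ^ 2 - (m - 1) / 2 * x := by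
          field_simp
        rw [← mul_le_mul_iff_of_pos_right (by positivity : (0 : ℝ) < x ^ 2), key2, key3]
        nlinarith [mul_nonneg (sub_nonneg.2 hm.le) hx0.le]
      have hmain : (1 - m / x) * Real.sqrt x ≤ (1 - a / x) * Real.sqrt (k : ℝ) := by
        calc (1 - m / x) * Real.sqrt x
            ≤ (1 - m / x) * ((1 + 1 / x) * Real.sqrt (k : ℝ)) :=
              mul_le_mul_of_nonneg_left hratio hfacm
          _ = ((1 - m / x) * (1 + 1 / x)) * Real.sqrt (k : ℝ) := by ring
          _ ≤ (1 - a / x) * Real.sqrt (k : ℝ) :=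
              mul_le_mul_of_nonneg_right hcoef (Real.sqrt_nonneg _)
      -- the error term bound
      have hc4 : L / Real.sqrt x ≤ a * ε := by
        have haε : 0 < a * ε := mul_pos ha hε
        have hsq : L / (a * ε) ≤ Real.sqrt x := by
          have h1 : Real.sqrt ((L / (a * ε)) ^ 2) ≤ Real.sqrt x := Real.sqrt_le_sqrt c4
          have h2 : L / (a * ε) ≤ Real.sqrt ((L / (a * ε)) ^ 2) := by
            rw [Real.sqrt_sq_eq_abs]; exact le_abs_self _
          linarith
        rw [div_le_iff₀ hsx]
        calc L = (L / (a * ε)) * (a * ε) := by field_simp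
          _ ≤ Real.sqrt x * (a * ε) := mul_le_mul_of_nonneg_right hsq haε.le
          _ = a * ε * Real.sqrt x := by ring
      -- assemble
      have step1 : u (k + 1) ≤ Real.sqrt x *
          ((1 - m / x) * w k + χ * L * Real.sqrt d / x ^ ((3 : ℝ) / 2) + L / x ^ 2) := by
        show Real.sqrt ((k + 1 : ℕ) : ℝ) * w (k + 1) ≤ _
        rw [hcast]
        exact mul_le_mul_of_nonneg_left hw (Real.sqrt_nonneg _)
      have step3 : ((1 - m / x) * Real.sqrt x) * w k ≤ (1 - a / x) * u k := by
        have h := mul_le_mul_of_nonneg_right hmain (hw_nonneg k)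
        calc ((1 - m / x) * Real.sqrt x) * w k
            ≤ ((1 - a / x) * Real.sqrt (k : ℝ)) * w k := h
          _ = (1 - a / x) * u k := by rw [hu']; ring
      have B2 : Real.sqrt x * (χ * L * Real.sqrt d / x ^ ((3 : ℝ) / 2)) =
          χ * L * Real.sqrt d / x := by
        rw [h32]
        field_simp
      have hterm3 : Real.sqrt x * (L / x ^ 2) ≤ (a * ε) / x := by
        have hC2 : Real.sqrt x * (L / x ^ 2) = (L / Real.sqrt x) / x := by
          rw [div_div]
          field_simp
          linear_combination hss
        rw [hC2]
        gcongr
      have hterm4 : χ * L * Real.sqrt d / x + (a * ε) / x ≤ (B + a * ε) / x := by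
        rw [← add_div]
        gcongr
        rw [hB]
        linarith
      calc u (k + 1) ≤ Real.sqrt x *
            ((1 - m / x) * w k + χ * L * Real.sqrt d / x ^ ((3 : ℝ) / 2) + L / x ^ 2) := step1
        _ = ((1 - m / x) * Real.sqrt x) * w k
            + Real.sqrt x * (χ * L * Real.sqrt d / x ^ ((3 : ℝ) / 2))
            + Real.sqrt x * (L / x ^ 2) := by ring
        _ = ((1 - m / x) * Real.sqrt x) * w k + χ * L * Real.sqrt d / x
            + Real.sqrt x * (L / x ^ 2) := by rw [B2]
        _ ≤ (1 - a / x) * u k + (B + a * ε) / x := by linarith [step3, hterm3, hterm4]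
    have hfac : ∀ k, N ≤ k → 0 ≤ 1 - a / ((k : ℝ) + 1) := by
      intro k hk
      obtain ⟨_, c2, _, _⟩ := hN k hk
      have hx0 : (0 : ℝ) < (k : ℝ) + 1 := by positivity
      have h1 : a / ((k : ℝ) + 1) ≤ 1 := by
        rw [div_le_one hx0, ha']
        linarith
      linarith
    have hls := aux_recursion_limsup a (B + a * ε) ha u hu N hrec' hfac
    have heq : (B + a * ε) / a = B / a + ε := by
      field_simp
    calc limsup u atTop ≤ (B + a * ε) / a := hls
      _ = B / a + ε := heq
  exact le_of_forall_pos_le_add key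
end
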